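/- Let n ≥ 2 be an integer and let O be an integral domain of characteristic zero such that no rational prime dividing n is a unit in O. Suppose α ∈ O has finite multiplicative order and (α−1)² ∈ nO. Then α^R(n) = 1, where R(n) = 1 for n ≥ 5, R(4) = 2, R(3) = 3, and R(2) = 4. -/

import Mathlib

/-- R(n) = 1 for n ≥ 5, R(4) = 2, R(3) = 3, R(2) = 4. -/
def Rval (n : ℕ) : ℕ := if 5 ≤ n then 1 else if n = 4 then 2 else if n = 3 then 3 else 4

lemma two_pow_big : ∀ k : ℕ, 3 ≤ k → 2 * k + 1 < 2 ^ k := by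
  intro k hk
  induction k with
  | zero => omega
  | succ m ih =>
    rcases Nat.lt_or_ge m 3 with hm | hm
    · interval_cases m <;> simp_all
    · have := ih (by omega)
      have h1 : 1 ≤ 2 ^ m := Nat.one_le_two_pow
      rw [pow_succ]
      omega

theorem stmt_0 (n : ℕ) (hn : 2 ≤ n) (O : Type*) [CommRing O] [IsDomain O] [CharZero O]
    (hnu : ∀ p : ℕ, p.Prime → p ∣ n → ¬ IsUnit ((p : O)))
    (α : O) (hord : ∃ k : ℕ, 1 ≤ k ∧ α ^ k = 1)
    (hcong : ∃ β : O, (α - 1) ^ 2 = (n : O) * β) :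
    α ^ (Rval n) = 1 := by
  obtain ⟨β, hβ⟩ := hcong
  obtain ⟨k0, hk0, hk0e⟩ := hord
  have hfin : IsOfFinOrder α := isOfFinOrder_iff_pow_eq_one.mpr ⟨k0, hk0, hk0e⟩
  set d := orderOf α with hd
  have hd0 : 0 < d := hfin.orderOf_pos
  by_cases hda : d = 1
  · have h1 : α = 1 := orderOf_eq_one_iff.mp hda
    simp [h1]
  have hd2 : 2 ≤ d := by omega
  -- Step 1: for every prime p dividing n, d is a power of p.
  have key : ∀ p : ℕ, p.Prime → p ∣ n → d = p ^ (d.factorization p) := by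
    intro p hp hpn
    -- maximal ideal containing p
    have hsp : Ideal.span {(p : O)} ≠ ⊤ := by
      rw [Ne, Ideal.span_singleton_eq_top]
      exact hnu p hp hpn
    obtain ⟨M, hM, hle⟩ := Ideal.exists_le_maximal _ hsp
    have hpM : (p : O) ∈ M := hle (Ideal.mem_span_singleton_self _)
    have hnM : (n : O) ∈ M := by
      obtain ⟨c, hc⟩ := hpn
      have : (n : O) = (p : O) * (c : O) := by push_cast [hc]; ring
      rw [this]
      exact Ideal.mul_mem_right _ _ hpM
    have hα1M : α - 1 ∈ M := by
      refine hM.isPrime.mem_of_pow_mem 2 ?_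
      rw [hβ]
      exact Ideal.mul_mem_right _ _ hnM
    set k := d.factorization p with hk
    set m' := d / p ^ k with hm'
    have hdeq : p ^ k * m' = d := Nat.ordProj_mul_ordCompl_eq_self d p
    have hpm' : ¬ p ∣ m' := Nat.not_dvd_ordCompl hp (by omega)
    set γ : O := α ^ p ^ k with hγ
    have hγm' : γ ^ m' = 1 := by
      rw [hγ, ← pow_mul, hdeq]
      exact pow_orderOf_eq_one α
    have hγM : γ - 1 ∈ M := by
      have hgs := geom_sum_mul α (p ^ k)
      rw [← hgs]
      exact Ideal.mul_mem_left _ _ hα1M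
    -- the geometric sum is not zero
    set S : O := ∑ i ∈ Finset.range m', γ ^ i with hS
    have hSM : S ∉ M := by
      intro hmem
      have hq : Ideal.Quotient.mk M S = 0 := (Ideal.Quotient.eq_zero_iff_mem).mpr hmem
      have hγ1 : Ideal.Quotient.mk M γ = 1 := by
        have : Ideal.Quotient.mk M γ = Ideal.Quotient.mk M 1 := Ideal.Quotient.eq.mpr hγM
        simpa using this
      have hqS : Ideal.Quotient.mk M S = (m' : O ⧸ M) := by
        rw [hS, map_sum]
        simp [map_pow, hγ1]
      rw [hqS] at hq
      -- characteristic of the quotient field is p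
      have hpF : ((p : ℕ) : O ⧸ M) = 0 := by
        rw [← map_natCast (Ideal.Quotient.mk M)]
        exact (Ideal.Quotient.eq_zero_iff_mem).mpr hpM
      haveI := hM.isPrime
      have hchp : ringChar (O ⧸ M) ∣ p := (ringChar.spec _ p).mp hpF
      have hchm : ringChar (O ⧸ M) ∣ m' := (ringChar.spec _ m').mp hq
      rcases (Nat.Prime.eq_one_or_self_of_dvd hp _ hchp) with h1 | h1
      · have : ((1 : ℕ) : O ⧸ M) = 0 := (ringChar.spec _ 1).mpr (h1 ▸ dvd_refl _)
        simp at this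
      · exact hpm' (h1 ▸ hchm)
    have hS0 : S ≠ 0 := fun h => hSM (h ▸ M.zero_mem)
    have hprod : S * (γ - 1) = 0 := by
      rw [hS, geom_sum_mul, hγm', sub_self]
    have hγeq : γ = 1 := by
      rcases mul_eq_zero.mp hprod with h | h
      · exact absurd h hS0
      · exact sub_eq_zero.mp h
    have hddvd : d ∣ p ^ k := orderOf_dvd_of_pow_eq_one (by rw [← hγ]; exact hγeq)
    exact Nat.dvd_antisymm hddvd (Nat.ordProj_dvd d p)
  -- p = minFac n
  set p := n.minFac with hpdef
  have hp : p.Prime := Nat.minFac_prime (by omega)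
  have hpn : p ∣ n := Nat.minFac_dvd n
  set kp := d.factorization p with hkp
  have hdp : d = p ^ kp := key p hp hpn
  have hkp1 : 1 ≤ kp := by
    by_contra h
    have : kp = 0 := by omega
    rw [this, pow_zero] at hdp
    omega
  -- n is a power of p
  have huniq : ∀ {q : ℕ}, q.Prime → q ∣ n → q = p := by
    intro q hq hqn
    have hdq : d = q ^ (d.factorization q) := key q hq hqn
    have hq1 : 1 ≤ d.factorization q := by
      by_contra h
      have : d.factorization q = 0 := by omega
      rw [this, pow_zero] at hdq
      omega
    have hqd : q ∣ d := hdq ▸ dvd_pow_self q (by omega)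
    have : q ∣ p := hq.dvd_of_dvd_pow (hdp ▸ hqd)
    exact (Nat.prime_dvd_prime_iff_eq hq hp).mp this
  set a := n.primeFactorsList.length with ha
  have hna : n = p ^ a := Nat.eq_prime_pow_of_unique_prime_dvd (by omega) huniq
  have ha1 : 1 ≤ a := by
    by_contra h
    have : a = 0 := by omega
    rw [this, pow_zero] at hna
    omega
  -- Step 2: a * (d - 1) ≤ 2 * kp
  have hprim : IsPrimitiveRoot α d := IsPrimitiveRoot.orderOf α
  have hineq : a * (d - 1) ≤ 2 * kp := by
    by_contra hcon
    push_neg at hcon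
    obtain ⟨z, -, hz⟩ := hprim.self_sub_one_pow_dvd_order (Nat.sub_lt hd0 one_pos)
    have hcalc : ((p : O)) ^ (2 * kp) = (p : O) ^ (a * (d - 1)) * (z ^ 2 * β ^ (d - 1)) := by
      have h1 : ((p : O)) ^ (2 * kp) = ((d : ℕ) : O) ^ 2 := by
        rw [hdp]; push_cast; rw [← pow_mul, mul_comm]
      rw [h1, hz, mul_pow, ← pow_mul, mul_comm (d-1) 2, pow_mul, hβ, hna]
      push_cast
      rw [mul_pow, ← pow_mul]
      ring
    set e := a * (d - 1) - (2 * kp + 1) with he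
    have hae : a * (d - 1) = 2 * kp + (e + 1) := by omega
    rw [hae, pow_add] at hcalc
    have hP : ((p : O)) ^ (2 * kp) ≠ 0 :=
      pow_ne_zero _ (Nat.cast_ne_zero.mpr hp.pos.ne')
    have h1 : (1 : O) = (p : O) ^ (e + 1) * (z ^ 2 * β ^ (d - 1)) := by
      apply mul_left_cancel₀ hP
      rw [mul_one]
      conv_lhs => rw [hcalc]
      rw [mul_assoc]
    have : IsUnit ((p : O)) := by
      apply IsUnit.of_mul_eq_one ((p : O) ^ e * (z ^ 2 * β ^ (d - 1)))
      rw [← mul_assoc, ← pow_succ']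
      exact h1.symm
    exact hnu p hp hpn this
  -- arithmetic case analysis
  have hp2 : 2 ≤ p := hp.two_le
  have hd1 : d - 1 = p ^ kp - 1 := by rw [hdp]
  rw [hd1] at hineq
  have hple : p ^ kp ≤ 2 * kp + 1 := by
    have h1 : p ^ kp - 1 ≤ a * (p ^ kp - 1) := Nat.le_mul_of_pos_left _ (by omega)
    have h2 : 1 ≤ p ^ kp := Nat.one_le_pow _ _ (by omega)
    omega
  have hkp2 : kp ≤ 2 := by
    by_contra h
    have h3 : 3 ≤ kp := by omega
    have := two_pow_big kp h3
    have h4 : 2 ^ kp ≤ p ^ kp := Nat.pow_le_pow_left hp2 _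
    omega
  -- show d ∣ Rval n
  suffices hdvd : d ∣ Rval n by
    exact orderOf_dvd_iff_pow_eq_one.mp hdvd
  interval_cases kp
  · -- kp = 1
    rw [pow_one] at hdp hple hineq
    have hp3 : p ≤ 3 := by omega
    interval_cases p
    · -- p = 2, d = 2, a ≤ 2
      have ha2 : a ≤ 2 := by omega
      interval_cases a
      · rw [pow_one] at hna
        rw [hna, hdp]; decide
      · have : n = 4 := by rw [hna]; norm_num
        rw [this, hdp]; decide
    · -- p = 3, d = 3, a = 1
      have ha2 : a = 1 := by omega
      rw [ha2, pow_one] at hna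
      rw [hna, hdp]; decide
  · -- kp = 2
    have hpp : p ^ 2 ≤ 5 := by omega
    have hp4 : p = 2 := by nlinarith
    rw [hp4] at hdp hineq hna
    have ha2 : a = 1 := by norm_num at hineq; omega
    rw [ha2, pow_one] at hna
    rw [hna, hdp]; decide
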